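/- arXiv:2201.08732 — 3 statements merged into one kernel-verified Lean document; each statement's English description precedes it below -/
import Mathlib

section
/- If B and C are d×d positive definite real matrices with B - C positive semidefinite, then for all nonzero vectors x, (xᵀBx)/(xᵀCx) ≤ det(B)/det(C). -/
open Matrix Finset
open scoped MatrixOrder

lemma key_quad (d : ℕ) (A : Matrix (Fin d) (Fin d) ℝ) (hA : A.IsHermitian)
    (h1 : (A - 1).PosSemidef) (y : Fin d → ℝ) :
    y ⬝ᵥ A *ᵥ y ≤ A.det * (y ⬝ᵥ y) := by
  have hev : ∀ i, 1 ≤ hA.eigenvalues i := by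
    intro i
    set v : Fin d → ℝ := ⇑(hA.eigenvectorBasis i) with hv
    have hnorm : v ⬝ᵥ v = 1 := by
      have h2 : (inner ℝ (hA.eigenvectorBasis i) (hA.eigenvectorBasis i) : ℝ) = 1 := by
        rw [real_inner_self_eq_norm_sq, hA.eigenvectorBasis.orthonormal.1 i]; norm_num
      rw [EuclideanSpace.inner_eq_star_dotProduct] at h2
      simpa using h2
    have h0 := h1.dotProduct_mulVec_nonneg v
    have hmv : (A - 1) *ᵥ v = (hA.eigenvalues i - 1) • v := by
      rw [sub_mulVec, hA.mulVec_eigenvectorBasis, one_mulVec, sub_smul, one_smul]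
    rw [star_trivial, hmv, dotProduct_smul, smul_eq_mul, hnorm, mul_one] at h0
    linarith
  -- spectral decomposition
  set U : Matrix (Fin d) (Fin d) ℝ := (hA.eigenvectorUnitary : Matrix (Fin d) (Fin d) ℝ) with hU
  set z : Fin d → ℝ := star U *ᵥ y with hz
  have hUU : U * star U = 1 := (Matrix.mem_unitaryGroup_iff).mp hA.eigenvectorUnitary.2
  have hUU' : star U * U = 1 := (Matrix.mem_unitaryGroup_iff').mp hA.eigenvectorUnitary.2
  have hquad : y ⬝ᵥ A *ᵥ y = ∑ i, hA.eigenvalues i * (z i)^2 := by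
    conv_lhs => rw [hA.spectral_theorem, Unitary.conjStarAlgAut_apply]
    rw [← hU, ← mulVec_mulVec, ← mulVec_mulVec, dotProduct_mulVec y U,
      ← mulVec_transpose]
    have : Uᵀ = star U := by
      ext i j; simp [hU, star_eq_conjTranspose, conjTranspose_apply]
    rw [this, ← hz]
    simp [dotProduct, diagonal_mulVec_single, mulVec_diagonal, Function.comp]
    congr 1; ext i; ring
  have hnorm : y ⬝ᵥ y = ∑ i, (z i)^2 := by
    have : z ⬝ᵥ z = y ⬝ᵥ y := by
      rw [hz, dotProduct_mulVec, ← mulVec_transpose]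
      have : (star U)ᵀ = U := by
        ext i j; simp [hU, star_eq_conjTranspose, conjTranspose_apply]
      rw [this, mulVec_mulVec, hUU, one_mulVec]
    rw [← this]
    simp [dotProduct]; congr 1; ext i; ring
  have hdet : A.det = ∏ i, hA.eigenvalues i := by
    have := hA.det_eq_prod_eigenvalues
    simpa using this
  rw [hquad, hnorm, hdet, Finset.mul_sum]
  apply Finset.sum_le_sum
  intro i _
  have hle : hA.eigenvalues i ≤ ∏ j, hA.eigenvalues j := by
    rw [← Finset.mul_prod_erase Finset.univ _ (Finset.mem_univ i)]
    have h1' : (1:ℝ) ≤ ∏ j ∈ Finset.univ.erase i, hA.eigenvalues j := by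
      calc (1:ℝ) = ∏ _j ∈ Finset.univ.erase i, (1:ℝ) := by simp
        _ ≤ _ := Finset.prod_le_prod (by intros; norm_num) (fun j _ => hev j)
    nlinarith [hev i]
  nlinarith [sq_nonneg (z i)]

/-- If `B ⪰ C ≻ 0` are `d × d` real positive definite matrices, then for every
nonzero vector `x`, `(xᵀBx)/(xᵀCx) ≤ det B / det C`. -/
theorem quadratic_ratio_le_det_ratio (d : ℕ)
    (B C : Matrix (Fin d) (Fin d) ℝ)
    (hB : B.PosDef) (hC : C.PosDef) (hBC : (B - C).PosSemidef)
    (x : Fin d → ℝ) (hx : x ≠ 0) :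
    (x ⬝ᵥ B *ᵥ x) / (x ⬝ᵥ C *ᵥ x) ≤ B.det / C.det := by
  classical
  set S : Matrix (Fin d) (Fin d) ℝ := CFC.sqrt C with hS
  have hSS : S * S = C := CFC.mul_self_eq rfl (nonneg_iff_posSemidef.mpr hC.posSemidef)
  have hSH : S.IsHermitian := (nonneg_iff_posSemidef.mp (CFC.sqrt_nonneg C)).1
  have hdetC : 0 < C.det := hC.det_pos
  have hdetS : S.det ≠ 0 := by
    intro h
    rw [← hSS, det_mul, h, mul_zero] at hdetC
    exact lt_irrefl _ hdetC
  have hSinv : S * S⁻¹ = 1 := mul_nonsing_inv S hdetS.isUnit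
  have hSinv' : S⁻¹ * S = 1 := nonsing_inv_mul S hdetS.isUnit
  have hT : Sᵀ = S := by
    ext i j; simpa using congrFun (congrFun hSH.eq i) j
  have hSiH : (S⁻¹).IsHermitian := hSH.inv
  set A : Matrix (Fin d) (Fin d) ℝ := S⁻¹ * B * S⁻¹ with hA
  have hAH : A.IsHermitian := by
    unfold Matrix.IsHermitian
    rw [hA, conjTranspose_mul, conjTranspose_mul, hSiH.eq, hB.1.eq, mul_assoc]
  have hA1 : (A - 1).PosSemidef := by
    have h2 : A - 1 = S⁻¹ * (B - C) * (S⁻¹)ᴴ := by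
      rw [hSiH.eq, hA, Matrix.mul_sub, Matrix.sub_mul]
      congr 1
      rw [← hSS, ← mul_assoc, hSinv', one_mul, hSinv]
    rw [h2]
    exact hBC.mul_mul_conjTranspose_same S⁻¹
  have hSAS : S * A * S = B := by
    simp only [hA, Matrix.mul_assoc]
    rw [hSinv', Matrix.mul_one, ← Matrix.mul_assoc, hSinv, Matrix.one_mul]
  have hvm : S *ᵥ x = x ᵥ* S := by rw [← hT, mulVec_transpose, hT]
  have key := key_quad d A hAH hA1 (S *ᵥ x)
  have hquadB : (S *ᵥ x) ⬝ᵥ A *ᵥ (S *ᵥ x) = x ⬝ᵥ B *ᵥ x := by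
    nth_rewrite 1 [hvm]
    rw [mulVec_mulVec, ← dotProduct_mulVec, mulVec_mulVec, ← mul_assoc, hSAS]
  have hquadC : (S *ᵥ x) ⬝ᵥ (S *ᵥ x) = x ⬝ᵥ C *ᵥ x := by
    nth_rewrite 1 [hvm]
    rw [← dotProduct_mulVec, mulVec_mulVec, hSS]
  have hdetA : A.det = B.det / C.det := by
    rw [hA, det_mul, det_mul, det_nonsing_inv, ← hSS, det_mul, Ring.inverse_eq_inv']
    field_simp
  have hCx : 0 < x ⬝ᵥ C *ᵥ x := by simpa using hC.dotProduct_mulVec_pos hx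
  rw [div_le_div_iff₀ hCx hdetC]
  rw [hquadB, hquadC, hdetA] at key
  calc (x ⬝ᵥ B *ᵥ x) * C.det ≤ ((B.det / C.det) * (x ⬝ᵥ C *ᵥ x)) * C.det :=
        mul_le_mul_of_nonneg_right key hdetC.le
    _ = B.det * (x ⬝ᵥ C *ᵥ x) := by field_simp
end

section
/- Let V_n = λI + Σ_{n'≤n,h≤H} φ_{n',h}φ_{n',h}ᵀ with ‖φ_{n,h}‖₂² ≤ C_φ, and let w_{n,h}² = φ_{n,h}ᵀ V_{n-1}^{-1} φ_{n,h} (using the Gram matrix fixed at the start of episode n). Then Σ_{n=1}^N Σ_{h=1}^H min(1, w_{n,h}²) ≤ 2H·d·ln(1 + N H C_φ/(λ d)). -/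
open Matrix

variable {d : ℕ}

lemma vecMulVec_mulVec' (v w x : Fin d → ℝ) :
    vecMulVec v w *ᵥ x = (w ⬝ᵥ x) • v := by
  ext i
  simp only [mulVec, dotProduct, vecMulVec_apply, Pi.smul_apply, smul_eq_mul,
    Finset.sum_mul, Finset.mul_sum]
  rw [Finset.sum_congr rfl]
  intros; ring

lemma psd_vecMulVec (v : Fin d → ℝ) : (vecMulVec v v).PosSemidef := by
  refine PosSemidef.of_dotProduct_mulVec_nonneg ?_ ?_
  · ext i j
    simp [conjTranspose_apply, vecMulVec_apply, mul_comm]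
  · intro x
    rw [vecMulVec_mulVec', dotProduct_smul, star_trivial]
    rw [smul_eq_mul, dotProduct_comm x v]
    exact mul_self_nonneg _

lemma posDef_smul_one {lam : ℝ} (h : 0 < lam) :
    (lam • (1 : Matrix (Fin d) (Fin d) ℝ)).PosDef := by
  rw [Matrix.smul_one_eq_diagonal]
  exact Matrix.PosDef.diagonal fun _ => h

lemma det_add_vecMulVec {A : Matrix (Fin d) (Fin d) ℝ} (hA : A.PosDef) (v : Fin d → ℝ) :
    (A + vecMulVec v v).det = A.det * (1 + v ⬝ᵥ A⁻¹ *ᵥ v) := by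
  rw [vecMulVec_eq (Fin 1),
    Matrix.det_add_replicateCol_mul_replicateRow (isUnit_iff_ne_zero.2 hA.det_pos.ne') v v]
  have h1 : replicateRow (Fin 1) v * A⁻¹ * replicateCol (Fin 1) v = replicateRow (Fin 1) v * replicateCol (Fin 1) (A⁻¹ *ᵥ v) := by
    rw [Matrix.mul_assoc, Matrix.replicateCol_mulVec]
  rw [show (fun a b => decidableEq_of_subsingleton a b : DecidableEq (Fin 1))
      = instDecidableEqFin 1 from Subsingleton.elim _ _]
  rw [h1]
  simp [Matrix.det_unique, Matrix.add_apply, Matrix.one_apply, Matrix.replicateRow_mul_replicateCol_apply]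

lemma quad_nonneg {A : Matrix (Fin d) (Fin d) ℝ} (hA : A.PosSemidef) (v : Fin d → ℝ) :
    0 ≤ v ⬝ᵥ A *ᵥ v := by
  have := hA.dotProduct_mulVec_nonneg v
  rwa [star_trivial] at this

lemma det_le_det_add_vecMulVec {A : Matrix (Fin d) (Fin d) ℝ} (hA : A.PosDef) (v : Fin d → ℝ) :
    A.det ≤ (A + vecMulVec v v).det := by
  rw [det_add_vecMulVec hA v]
  nlinarith [hA.det_pos, quad_nonneg (hA.inv.posSemidef) v]

lemma posDef_add_sum {ι : Type*} {A : Matrix (Fin d) (Fin d) ℝ} (hA : A.PosDef)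
    (s : Finset ι) (ψ : ι → Fin d → ℝ) :
    (A + ∑ h ∈ s, vecMulVec (ψ h) (ψ h)).PosDef := by
  refine hA.add_posSemidef ?_
  refine Finset.sum_induction _ _ (fun a b ha hb => ha.add hb) Matrix.PosSemidef.zero ?_
  exact fun h _ => psd_vecMulVec (ψ h)

lemma det_le_det_add_sum {ι : Type*} {A : Matrix (Fin d) (Fin d) ℝ} (hA : A.PosDef)
    (s : Finset ι) (ψ : ι → Fin d → ℝ) :
    A.det ≤ (A + ∑ h ∈ s, vecMulVec (ψ h) (ψ h)).det := by
  classical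
  induction s using Finset.induction with
  | empty => simp
  | @insert a s hni ih =>
    have e : A + ∑ h ∈ insert a s, vecMulVec (ψ h) (ψ h)
        = (A + ∑ h ∈ s, vecMulVec (ψ h) (ψ h)) + vecMulVec (ψ a) (ψ a) := by
      rw [Finset.sum_insert hni]; abel
    rw [e]
    exact ih.trans (det_le_det_add_vecMulVec (posDef_add_sum hA s ψ) (ψ a))

lemma min_one_le_two_log {x : ℝ} (hx : 0 ≤ x) : min 1 x ≤ 2 * Real.log (1 + x) := by
  rcases le_total x 1 with h | h
  · rw [min_eq_right h]
    have hpos : (0:ℝ) < 1 + x := by linarith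
    have hlog : Real.log (1 + x)⁻¹ ≤ (1 + x)⁻¹ - 1 :=
      Real.log_le_sub_one_of_pos (by positivity)
    rw [Real.log_inv] at hlog
    have h2 : 1 - (1 + x)⁻¹ ≤ Real.log (1 + x) := by linarith
    have h3 : x / 2 ≤ 1 - (1 + x)⁻¹ := by
      have he : (1:ℝ) - (1+x)⁻¹ = x / (1+x) := by field_simp; ring
      rw [he, div_le_div_iff₀ (by norm_num : (0:ℝ) < 2) hpos]
      nlinarith
    linarith
  · rw [min_eq_left h]
    have hlog2 : (1:ℝ)/2 ≤ Real.log 2 := by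
      rw [Real.le_log_iff_exp_le (by norm_num : (0:ℝ) < 2)]
      have he : Real.exp (1/2) ^ 2 = Real.exp 1 := by
        rw [← Real.exp_nat_mul]; norm_num
      nlinarith [Real.exp_pos (1/2 : ℝ), Real.exp_one_lt_d9]
    have : Real.log 2 ≤ Real.log (1 + x) :=
      Real.log_le_log (by norm_num) (by linarith)
    linarith

lemma trace_eq_sum_eigenvalues {A : Matrix (Fin d) (Fin d) ℝ} (hA : A.IsHermitian) :
    A.trace = ∑ i, hA.eigenvalues i := by
  simpa using hA.trace_eq_sum_eigenvalues

lemma det_le_trace_div_pow {A : Matrix (Fin d) (Fin d) ℝ} (hd : 0 < d) (hA : A.PosSemidef) :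
    A.det ≤ (A.trace / d) ^ d := by
  have hμ : ∀ i, 0 ≤ hA.1.eigenvalues i := hA.eigenvalues_nonneg
  have hdet : A.det = ∏ i, hA.1.eigenvalues i := by
    have := hA.1.det_eq_prod_eigenvalues
    simpa using this
  have htr : A.trace = ∑ i, hA.1.eigenvalues i := trace_eq_sum_eigenvalues hA.1
  rw [hdet, htr]
  -- AM-GM
  have hdR : (0:ℝ) < d := by exact_mod_cast hd
  have amgm := Real.geom_mean_le_arith_mean_weighted Finset.univ
      (fun _ : Fin d => 1 / d) (fun i => hA.1.eigenvalues i)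
      (fun i _ => by positivity)
      (by simp [Finset.card_univ]; field_simp)
      (fun i _ => hμ i)
  have key : (∏ i, hA.1.eigenvalues i ^ ((1:ℝ)/d)) ^ d
      = ∏ i, hA.1.eigenvalues i := by
    rw [← Real.rpow_natCast (∏ i, hA.1.eigenvalues i ^ ((1:ℝ)/d)) d,
      ← Real.finset_prod_rpow _ _ (fun i _ => Real.rpow_nonneg (hμ i) _)]
    refine Finset.prod_congr rfl fun i _ => ?_
    rw [← Real.rpow_mul (hμ i), one_div, inv_mul_cancel₀ hdR.ne', Real.rpow_one]
  calc (∏ i, hA.1.eigenvalues i)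
      = (∏ i, hA.1.eigenvalues i ^ ((1:ℝ)/d)) ^ d := key.symm
    _ ≤ (∑ i, (1/d : ℝ) * hA.1.eigenvalues i) ^ d := by
        refine pow_le_pow_left₀ ?_ amgm d
        exact Finset.prod_nonneg fun i _ => Real.rpow_nonneg (hμ i) _
    _ = ((∑ i, hA.1.eigenvalues i) / d) ^ d := by
        rw [← Finset.mul_sum]; ring_nf

/-- Stale-feature log-determinant lemma (Lemma 8 of Yang–Wang style): with
`V_n = λI + Σ_{n'<n} Σ_{h<H} φ_{n',h}φ_{n',h}ᵀ` held fixed within episode `n`, and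
`w_{n,h}² = φ_{n,h}ᵀ V_n⁻¹ φ_{n,h}`, if `‖φ_{n,h}‖₂² ≤ C_φ` then
`Σ_{n<N} Σ_{h<H} min(1, w_{n,h}²) ≤ 2 H d ln(1 + N H C_φ/(λ d))`. -/
theorem stale_feature_log_det (d N H : ℕ) (hd : 0 < d)
    (lam : ℝ) (hlam : 0 < lam)
    (φ : ℕ → ℕ → Fin d → ℝ) (Cφ : ℝ)
    (hφ : ∀ n < N, ∀ h < H, ∑ i : Fin d, (φ n h i) ^ 2 ≤ Cφ)
    (V : ℕ → Matrix (Fin d) (Fin d) ℝ)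
    (hV : ∀ n, V n = lam • (1 : Matrix (Fin d) (Fin d) ℝ)
        + ∑ n' ∈ Finset.range n, ∑ h ∈ Finset.range H, vecMulVec (φ n' h) (φ n' h)) :
    ∑ n ∈ Finset.range N, ∑ h ∈ Finset.range H,
        min 1 (φ n h ⬝ᵥ (V n)⁻¹ *ᵥ φ n h)
      ≤ 2 * H * d * Real.log (1 + N * H * Cφ / (lam * d)) := by
  classical
  rcases Nat.eq_zero_or_pos N with hN | hN
  · subst hN; simp
  rcases Nat.eq_zero_or_pos H with hH | hH
  · subst hH; simp
  have hCφ : 0 ≤ Cφ :=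
    le_trans (Finset.sum_nonneg fun i _ => sq_nonneg _) (hφ 0 hN 0 hH)
  have hdR : (0:ℝ) < d := by exact_mod_cast hd
  -- positive definiteness
  have hpsdsum : ∀ (s : Finset ℕ),
      (∑ n' ∈ s, ∑ h ∈ Finset.range H, vecMulVec (φ n' h) (φ n' h)).PosSemidef := by
    intro s
    refine Finset.sum_induction _ _ (fun a b ha hb => ha.add hb) Matrix.PosSemidef.zero
      fun n' _ => ?_
    exact Finset.sum_induction _ _ (fun a b ha hb => ha.add hb) Matrix.PosSemidef.zero
      fun h _ => psd_vecMulVec (φ n' h)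
  have hVpd : ∀ n, (V n).PosDef := by
    intro n
    rw [hV n]
    exact (posDef_smul_one hlam).add_posSemidef (hpsdsum _)
  set w : ℕ → ℕ → ℝ := fun n h => φ n h ⬝ᵥ (V n)⁻¹ *ᵥ φ n h with hwdef
  have hw0 : ∀ n h, 0 ≤ w n h := fun n h => quad_nonneg (hVpd n).inv.posSemidef _
  -- step inequality
  have hstep : ∀ n, ∀ h < H, (V n).det * (1 + w n h) ≤ (V (n+1)).det := by
    intro n h hh
    have hsucc : V (n+1) = (V n + vecMulVec (φ n h) (φ n h)) +
        ∑ h' ∈ (Finset.range H).erase h, vecMulVec (φ n h') (φ n h') := by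
      rw [hV (n+1), hV n, Finset.sum_range_succ,
        ← Finset.add_sum_erase _ _ (Finset.mem_range.2 hh)]
      abel
    rw [hsucc, ← det_add_vecMulVec (hVpd n) (φ n h)]
    exact det_le_det_add_sum ((hVpd n).add_posSemidef (psd_vecMulVec _)) _ _
  -- per-term bound
  have hterm : ∀ n, ∀ h < H,
      min 1 (w n h) ≤ 2 * (Real.log (V (n+1)).det - Real.log (V n).det) := by
    intro n h hh
    have hd1 : 0 < (V n).det := (hVpd n).det_pos
    have hpos : 0 < 1 + w n h := by nlinarith [hw0 n h]
    have h2 : Real.log (1 + w n h)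
        ≤ Real.log (V (n+1)).det - Real.log (V n).det := by
      have hlogle := Real.log_le_log (by positivity) (hstep n h hh)
      rw [Real.log_mul hd1.ne' hpos.ne'] at hlogle
      linarith
    have h1 := min_one_le_two_log (hw0 n h)
    linarith
  -- summation and telescoping
  have hsum : ∑ n ∈ Finset.range N, ∑ h ∈ Finset.range H, min 1 (w n h)
      ≤ 2 * H * (Real.log (V N).det - Real.log (V 0).det) := by
    have h1 : ∀ n, ∑ h ∈ Finset.range H, min 1 (w n h)
        ≤ (H:ℝ) * (2 * (Real.log (V (n+1)).det - Real.log (V n).det)) := by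
      intro n
      calc ∑ h ∈ Finset.range H, min 1 (w n h)
          ≤ ∑ _h ∈ Finset.range H,
              2 * (Real.log (V (n+1)).det - Real.log (V n).det) :=
            Finset.sum_le_sum fun h hh => hterm n h (Finset.mem_range.1 hh)
        _ = (H:ℝ) * (2 * (Real.log (V (n+1)).det - Real.log (V n).det)) := by
            rw [Finset.sum_const, Finset.card_range, nsmul_eq_mul]
    calc ∑ n ∈ Finset.range N, ∑ h ∈ Finset.range H, min 1 (w n h)
        ≤ ∑ n ∈ Finset.range N,
            (H:ℝ) * (2 * (Real.log (V (n+1)).det - Real.log (V n).det)) :=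
          Finset.sum_le_sum fun n _ => h1 n
      _ = 2 * H * (Real.log (V N).det - Real.log (V 0).det) := by
          rw [← Finset.mul_sum, ← Finset.mul_sum,
            Finset.sum_range_sub (fun n => Real.log (V n).det)]
          ring
  -- bounds on determinants
  have hV0 : (V 0).det = lam ^ d := by
    rw [hV 0]
    simp [Matrix.det_smul]
  have htrace : (V N).trace ≤ lam * d + N * H * Cφ := by
    rw [hV N, Matrix.trace_add, Matrix.trace_smul, Matrix.trace_one]
    have h1 : (∑ n' ∈ Finset.range N, ∑ h ∈ Finset.range H,
        vecMulVec (φ n' h) (φ n' h)).trace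
        = ∑ n' ∈ Finset.range N, ∑ h ∈ Finset.range H,
            (vecMulVec (φ n' h) (φ n' h)).trace := by
      rw [Matrix.trace_sum]
      exact Finset.sum_congr rfl fun n' _ => Matrix.trace_sum _ _
    rw [h1]
    have h2 : ∀ n' < N, ∀ h < H, (vecMulVec (φ n' h) (φ n' h)).trace ≤ Cφ := by
      intro n' hn' h hh
      have : (vecMulVec (φ n' h) (φ n' h)).trace = ∑ i : Fin d, (φ n' h i) ^ 2 := by
        simp [Matrix.trace, Matrix.diag, vecMulVec_apply, sq]
      rw [this]
      exact hφ n' hn' h hh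
    have h3 : ∑ n' ∈ Finset.range N, ∑ h ∈ Finset.range H,
        (vecMulVec (φ n' h) (φ n' h)).trace ≤ ∑ _n' ∈ Finset.range N, (H:ℝ) * Cφ := by
      refine Finset.sum_le_sum fun n' hn' => ?_
      calc ∑ h ∈ Finset.range H, (vecMulVec (φ n' h) (φ n' h)).trace
          ≤ ∑ _h ∈ Finset.range H, Cφ :=
            Finset.sum_le_sum fun h hh =>
              h2 n' (Finset.mem_range.1 hn') h (Finset.mem_range.1 hh)
        _ = (H:ℝ) * Cφ := by rw [Finset.sum_const, Finset.card_range, nsmul_eq_mul]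
    have h4 : ∑ _n' ∈ Finset.range N, (H:ℝ) * Cφ = (N:ℝ) * H * Cφ := by
      rw [Finset.sum_const, Finset.card_range, nsmul_eq_mul]; ring
    have h5 := h3.trans_eq h4
    simp only [smul_eq_mul, Fintype.card_fin]
    linarith
  have hlogN : Real.log (V N).det
      ≤ d * Real.log (lam + N * H * Cφ / d) := by
    have hdet := det_le_trace_div_pow hd (hVpd N).posSemidef
    have harg : (0:ℝ) < lam + N * H * Cφ / d := by positivity
    have h8 : ((V N).trace / d) ≤ lam + N * H * Cφ / d := by
      rw [div_le_iff₀ hdR]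
      have he : (lam + (N:ℝ) * H * Cφ / d) * d = lam * d + (N:ℝ) * H * Cφ := by
        field_simp
      rw [he]
      exact htrace
    have htrnn : 0 ≤ (V N).trace := by
      rw [trace_eq_sum_eigenvalues (hVpd N).posSemidef.1]
      exact Finset.sum_nonneg fun i _ => (hVpd N).posSemidef.eigenvalues_nonneg i
    have h9 : (V N).det ≤ (lam + N * H * Cφ / d) ^ d :=
      hdet.trans (pow_le_pow_left₀ (div_nonneg htrnn hdR.le) h8 d)
    calc Real.log (V N).det ≤ Real.log ((lam + N * H * Cφ / d) ^ d) :=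
          Real.log_le_log (hVpd N).det_pos h9
      _ = d * Real.log (lam + N * H * Cφ / d) := by rw [Real.log_pow]
  -- assemble
  have hfinal : Real.log (V N).det - Real.log (V 0).det
      ≤ d * Real.log (1 + N * H * Cφ / (lam * d)) := by
    rw [hV0, Real.log_pow]
    have harg : (0:ℝ) < lam + N * H * Cφ / d := by positivity
    have h10 : Real.log (lam + N * H * Cφ / d) - Real.log lam
        = Real.log ((lam + N * H * Cφ / d) / lam) :=
      (Real.log_div harg.ne' hlam.ne').symm
    have h11 : (lam + N * H * Cφ / d) / lam = 1 + N * H * Cφ / (lam * d) := by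
      field_simp
      try ring
      try exact Or.inl trivial
    calc Real.log (V N).det - d * Real.log lam
        ≤ d * Real.log (lam + N * H * Cφ / d) - d * Real.log lam := by linarith [hlogN]
      _ = d * (Real.log (lam + N * H * Cφ / d) - Real.log lam) := by ring
      _ = d * Real.log (1 + N * H * Cφ / (lam * d)) := by rw [h10, h11]
  calc ∑ n ∈ Finset.range N, ∑ h ∈ Finset.range H, min 1 (w n h)
      ≤ 2 * H * (Real.log (V N).det - Real.log (V 0).det) := hsum
    _ ≤ 2 * H * (d * Real.log (1 + N * H * Cφ / (lam * d))) := by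
        have h2H : (0:ℝ) ≤ 2 * H := by positivity
        exact mul_le_mul_of_nonneg_left hfinal h2H
    _ = 2 * H * d * Real.log (1 + N * H * Cφ / (lam * d)) := by ring
end

section
/- Let V_{n+1} = V_n + Σ_{h=1}^H φ_{n,h}φ_{n,h}ᵀ with V_n positive definite, and w_{n,h}² = φ_{n,h}ᵀ V_n^{-1} φ_{n,h}. Then det(V_{n+1}) ≥ det(V_n) · Π_{h=1}^H (1 + w_{n,h}²)^{1/H}. -/
open Matrix

variable {d : ℕ}

-- eigenvalues of 1 + C are ≥ 1 for C PSD
lemma one_le_det_one_add {C : Matrix (Fin d) (Fin d) ℝ} (hC : C.PosSemidef) :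
    1 ≤ (1 + C).det := by
  have h1 : (1 + C).IsHermitian := isHermitian_one.add hC.1
  have key : ∀ i, 1 ≤ h1.eigenvalues i := by
    intro i
    set v : Fin d → ℝ := ⇑(h1.eigenvectorBasis i) with hv
    have hvne : v ≠ 0 := by
      intro h
      exact h1.eigenvectorBasis.orthonormal.ne_zero i (by ext j; exact congrFun h j)
    have hmv : (1 + C) *ᵥ v = h1.eigenvalues i • v := h1.mulVec_eigenvectorBasis i
    have hCv : C *ᵥ v = (h1.eigenvalues i - 1) • v := by
      rw [add_mulVec, one_mulVec] at hmv
      rw [sub_smul, one_smul, ← hmv]; abel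
    have hpos : 0 < star v ⬝ᵥ v := dotProduct_star_self_pos_iff.mpr hvne
    have h0 : 0 ≤ (h1.eigenvalues i - 1) * (star v ⬝ᵥ v) := by
      have := hC.dotProduct_mulVec_nonneg v
      rwa [hCv, dotProduct_smul, smul_eq_mul] at this
    nlinarith [h0, hpos]
  rw [h1.det_eq_prod_eigenvalues]
  have := Finset.prod_le_prod (s := Finset.univ) (f := fun _ => (1:ℝ))
    (g := fun i => h1.eigenvalues i) (fun i _ => zero_le_one) (fun i _ => key i)
  simpa using this

open scoped MatrixOrder in
lemma det_le_det_add {M N : Matrix (Fin d) (Fin d) ℝ}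
    (hM : M.PosDef) (hN : N.PosSemidef) : M.det ≤ (M + N).det := by
  set S := CFC.sqrt M with hSdef
  have hSS : S * S = M := CFC.sqrt_mul_sqrt_self M hM.posSemidef.nonneg
  have hSdet : S.det * S.det = M.det := by rw [← det_mul, hSS]
  have hSdet0 : IsUnit S.det := by
    have : S.det ≠ 0 := fun h => by
      have := hM.det_pos; rw [← hSdet, h, mul_zero] at this; exact lt_irrefl _ this
    exact this.isUnit
  have hSh : S⁻¹.IsHermitian := (CFC.sqrt_nonneg M).posSemidef.1.inv
  have hC : ((S⁻¹)ᴴ * N * S⁻¹).PosSemidef := hN.conjTranspose_mul_mul_same S⁻¹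
  rw [hSh.eq] at hC
  have hdecomp : M + N = S * (1 + S⁻¹ * N * S⁻¹) * S := by
    rw [Matrix.mul_add, Matrix.mul_one, Matrix.add_mul, hSS]
    congr 1
    rw [← Matrix.mul_assoc, ← Matrix.mul_assoc, Matrix.mul_nonsing_inv _ hSdet0,
      Matrix.one_mul, Matrix.mul_assoc, Matrix.nonsing_inv_mul _ hSdet0, Matrix.mul_one]
  rw [hdecomp, det_mul, det_mul]
  calc M.det = S.det * 1 * S.det := by rw [mul_one, hSdet]
    _ ≤ S.det * (1 + S⁻¹ * N * S⁻¹).det * S.det := by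
        have h1 := one_le_det_one_add hC
        nlinarith [sq_nonneg S.det, hM.det_pos, hSdet]

lemma posSemidef_vecMulVec_self (u : Fin d → ℝ) : (vecMulVec u u).PosSemidef := by
  refine PosSemidef.of_dotProduct_mulVec_nonneg ?_ ?_
  · ext i j; simp [vecMulVec_apply, mul_comm]
  · intro x
    have : vecMulVec u u *ᵥ x = (u ⬝ᵥ x) • u := by
      ext i; simp only [vecMulVec_apply, mulVec, dotProduct, Pi.smul_apply, smul_eq_mul,
        Finset.sum_mul]
      exact Finset.sum_congr rfl fun j _ => by ring
    rw [this, dotProduct_smul, smul_eq_mul]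
    have : star x ⬝ᵥ u = u ⬝ᵥ x := by simp [dotProduct, mul_comm]
    rw [this]
    exact mul_self_nonneg _

lemma det_add_vecMulVec_s11 (V : Matrix (Fin d) (Fin d) ℝ) (hV : V.PosDef) (u : Fin d → ℝ) :
    (V + vecMulVec u u).det = V.det * (1 + u ⬝ᵥ V⁻¹ *ᵥ u) := by
  rw [vecMulVec_eq Unit, det_add_replicateCol_mul_replicateRow hV.det_pos.ne'.isUnit]
  congr 1
  rw [det_unique]
  simp [Matrix.mul_apply, Matrix.replicateRow, Matrix.replicateCol, dotProduct, mulVec, Finset.mul_sum,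
    Finset.sum_mul]
  rw [Finset.sum_comm]
  simp [mul_comm, mul_assoc, mul_left_comm]

set_option maxHeartbeats 1000000 in
/-- With `V_{n+1} = V_n + Σ_{h<H} φ_h φ_hᵀ`, `V_n ≻ 0`, and
`w_h² = φ_hᵀ V_n⁻¹ φ_h`, one has `det V_{n+1} ≥ det V_n · Π_{h<H} (1 + w_h²)^{1/H}`. -/
theorem det_next_ge_prod (d H : ℕ) (hH : 0 < H)
    (Vn : Matrix (Fin d) (Fin d) ℝ) (hVn : Vn.PosDef)
    (φ : ℕ → Fin d → ℝ) :
    (Vn + ∑ h ∈ Finset.range H, vecMulVec (φ h) (φ h)).det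
      ≥ Vn.det * ∏ h ∈ Finset.range H,
          (1 + φ h ⬝ᵥ Vn⁻¹ *ᵥ φ h) ^ ((1 : ℝ) / H) := by
  set S := ∑ h ∈ Finset.range H, vecMulVec (φ h) (φ h) with hS
  set D := (Vn + S).det with hD
  have hdet := hVn.det_pos
  have hw : ∀ h, 0 ≤ φ h ⬝ᵥ Vn⁻¹ *ᵥ φ h := by
    intro h
    have := hVn.posSemidef.inv.dotProduct_mulVec_nonneg (φ h)
    simpa using this
  -- per-step lower bound
  have key : ∀ h ∈ Finset.range H, Vn.det * (1 + φ h ⬝ᵥ Vn⁻¹ *ᵥ φ h) ≤ D := by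
    intro h hh
    have hsplit : S = vecMulVec (φ h) (φ h)
        + ∑ j ∈ (Finset.range H).erase h, vecMulVec (φ j) (φ j) :=
      (Finset.add_sum_erase _ _ hh).symm
    have hrest : (∑ j ∈ (Finset.range H).erase h,
        vecMulVec (φ j) (φ j)).PosSemidef := by
      exact Finset.sum_induction (fun j => vecMulVec (φ j) (φ j)) Matrix.PosSemidef
        (fun a b ha hb => ha.add hb) Matrix.PosSemidef.zero
        (fun j _ => posSemidef_vecMulVec_self (φ j))
    have hMpd : (Vn + vecMulVec (φ h) (φ h)).PosDef :=
      hVn.add_posSemidef (posSemidef_vecMulVec_self (φ h))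
    calc Vn.det * (1 + φ h ⬝ᵥ Vn⁻¹ *ᵥ φ h)
        = (Vn + vecMulVec (φ h) (φ h)).det := (det_add_vecMulVec_s11 Vn hVn (φ h)).symm
      _ ≤ (Vn + vecMulVec (φ h) (φ h)
            + ∑ j ∈ (Finset.range H).erase h, vecMulVec (φ j) (φ j)).det :=
          det_le_det_add hMpd hrest
      _ = D := by rw [hD, hsplit, add_assoc]
  have hD1 : Vn.det ≤ D := by
    have h2 := mul_le_mul_of_nonneg_left (by linarith [hw 0] : (1:ℝ) ≤ 1 + φ 0 ⬝ᵥ Vn⁻¹ *ᵥ φ 0) hdet.le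
    have h3 := key 0 (Finset.mem_range.mpr hH)
    linarith
  have hr0 : (0:ℝ) ≤ D / Vn.det := div_nonneg (le_trans hdet.le hD1) hdet.le
  have hprod : ∏ h ∈ Finset.range H, (1 + φ h ⬝ᵥ Vn⁻¹ *ᵥ φ h) ^ ((1 : ℝ) / H)
      ≤ D / Vn.det := by
    have step : ∏ h ∈ Finset.range H, (1 + φ h ⬝ᵥ Vn⁻¹ *ᵥ φ h) ^ ((1 : ℝ) / H)
        ≤ ∏ _h ∈ Finset.range H, (D / Vn.det) ^ ((1 : ℝ) / H) := by
      apply Finset.prod_le_prod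
      · intro h _
        exact Real.rpow_nonneg (by linarith [hw h]) _
      · intro h hh
        apply Real.rpow_le_rpow (by linarith [hw h]) _ (by positivity)
        rw [le_div_iff₀ hdet]
        linarith [key h hh, mul_comm Vn.det (1 + φ h ⬝ᵥ Vn⁻¹ *ᵥ φ h)]
    refine step.trans ?_
    rw [Finset.prod_const, Finset.card_range, ← Real.rpow_natCast _ H,
      ← Real.rpow_mul hr0]
    rw [one_div, inv_mul_cancel₀ (by exact_mod_cast hH.ne' : (H:ℝ) ≠ 0), Real.rpow_one]
  calc Vn.det * ∏ h ∈ Finset.range H, (1 + φ h ⬝ᵥ Vn⁻¹ *ᵥ φ h) ^ ((1 : ℝ) / H)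
      ≤ Vn.det * (D / Vn.det) := by
        apply mul_le_mul_of_nonneg_left hprod hdet.le
    _ = D := mul_div_cancel₀ _ hdet.ne'
end
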